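/- Let E be a finite-dimensional real inner product space, let 0 < μ ≤ L, γ > 0, n ≥ 1 and s ∈ {1,…,n}. For each i ∈ {1,…,n}, let f_i : E → ℝ be differentiable, μ-strongly convex and L-smooth, and let x^⋆ ∈ E satisfy ∑_{i=1}^n ∇f_i(x^⋆) = 0 (the minimizer of ∑ f_i). Let x ∈ E and g_1,…,g_n ∈ E, and set g := (1/n)∑_{i=1}^n g_i. For each subset Ω ⊆ {1,…,n} with |Ω| = s, define one Point-SAGA step: for i ∈ Ω, z_i := x + γ·g_i − γ·g, let x_i'(Ω) be the unique point with x_i'(Ω) + γ·∇f_i(x_i'(Ω)) = z_i, and g_i'(Ω) := ∇f_i(x_i'(Ω)); for i ∉ Ω, g_i'(Ω) := g_i; and x'(Ω) := (1/s)·∑_{i∈Ω} x_i'(Ω). Define the Lyapunov function Ψ(y, h_1,…,h_n) := (1 + 2γμL/(L+μ))·s·‖y − x^⋆‖² + (1 + 2/(γ(L+μ)))·γ²·∑_{i=1}^n ‖h_i − ∇f_i(x^⋆)‖². Then the average over all size-s subsets satisfies (1/C(n,s))·∑_{Ω} Ψ(x'(Ω), g_1'(Ω),…,g_n'(Ω))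 ≤ max{ 1 − 2γμL/(L + μ + 2γμL), 1 − (2/(γ(L+μ)+2))·(s/n) } · Ψ(x, g_1,…,g_n). -/

import Mathlib

set_option maxHeartbeats 1000000

open Finset RealInnerProductSpace

section AuxAnalysis

variable {E : Type*} [NormedAddCommGroup E] [InnerProductSpace ℝ E] [CompleteSpace E]

open RealInnerProductSpace
variable {E : Type*} [NormedAddCommGroup E] [InnerProductSpace ℝ E] [CompleteSpace E]

lemma hasDerivAt_comp_line {F : E → ℝ} (hF : Differentiable ℝ F) (a v : E) (t : ℝ) :
    HasDerivAt (fun t : ℝ => F (a + t • v)) ⟪gradient F (a + t • v), v⟫ t := by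
  have h1 : HasFDerivAt F (InnerProductSpace.toDual ℝ E (gradient F (a + t • v))) (a + t • v) :=
    (hF _).hasGradientAt.hasFDerivAt
  have h2 : HasDerivAt (fun t : ℝ => a + t • v) v t := by
    simpa using ((hasDerivAt_id t).smul_const v).const_add a
  exact h1.comp_hasDerivAt t h2

lemma lowerbound_of_mono {F : E → ℝ} (hF : Differentiable ℝ F)
    (mono : ∀ a b : E, 0 ≤ ⟪gradient F b - gradient F a, b - a⟫) (a b : E) :
    F a + ⟪gradient F a, b - a⟫ ≤ F b := by
  set v := b - a with hv
  set ψ : ℝ → ℝ := fun t => ⟪gradient F (a + t • v), v⟫ with hψ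
  have hd : ∀ t : ℝ, HasDerivAt (fun t : ℝ => F (a + t • v)) (ψ t) t :=
    fun t => hasDerivAt_comp_line hF a v t
  have hmono : Monotone ψ := by
    intro s t hst
    rcases eq_or_lt_of_le hst with rfl | hlt
    · exact le_rfl
    have h := mono (a + s • v) (a + t • v)
    have hdiff : (a + t • v) - (a + s • v) = (t - s) • v := by
      rw [sub_smul]; abel
    rw [hdiff, real_inner_smul_right] at h
    have hts : 0 < t - s := by linarith
    have h2 : 0 ≤ ⟪gradient F (a + t • v) - gradient F (a + s • v), v⟫ :=
      (mul_nonneg_iff_of_pos_left hts).mp h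
    simp only [hψ, inner_sub_left] at h2 ⊢
    linarith
  obtain ⟨c, hc, hceq⟩ := exists_hasDerivAt_eq_slope (fun t : ℝ => F (a + t • v)) ψ one_pos
    (fun t _ => (hd t).continuousAt.continuousWithinAt) (fun t _ => hd t)
  have h0 : ψ 0 ≤ ψ c := hmono (le_of_lt hc.1)
  have e0 : a + (0:ℝ) • v = a := by simp
  have e1 : a + (1:ℝ) • v = b := by simp [hv]
  rw [e1, e0] at hceq
  simp only [sub_zero, div_one] at hceq
  have hψ0 : ψ 0 = ⟪gradient F a, b - a⟫ := by rw [hψ]; simp only [zero_smul, add_zero, hv]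
  rw [hψ0, hceq] at h0
  linarith

lemma lowerbound_of_convex {F : E → ℝ} (hF : Differentiable ℝ F)
    (hc : ConvexOn ℝ Set.univ F) (a b : E) :
    F a + ⟪gradient F a, b - a⟫ ≤ F b := by
  set v := b - a with hv
  set φ : ℝ → ℝ := fun t => F (a + t • v) with hφ
  have hconv : ConvexOn ℝ Set.univ φ := by
    have h := hc.comp_affineMap (AffineMap.lineMap a b)
    have heq : φ = F ∘ (AffineMap.lineMap a b) := by
      funext t
      simp only [hφ, Function.comp_apply, AffineMap.lineMap_apply_module, hv]
      congr 1
      module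
    rw [heq]
    simpa using h
  have hd0 : HasDerivAt φ ⟪gradient F (a + (0:ℝ) • v), v⟫ 0 := hasDerivAt_comp_line hF a v 0
  have hslope := hconv.le_slope_of_hasDerivAt (Set.mem_univ (0:ℝ)) (Set.mem_univ 1) one_pos hd0
  have e0 : a + (0:ℝ) • v = a := by simp
  have e1 : a + (1:ℝ) • v = b := by simp [hv]
  rw [slope_def_field] at hslope
  rw [e0] at hslope
  have hφ0 : φ 0 = F a := by rw [hφ]; simp only [zero_smul, add_zero]
  have hφ1 : φ 1 = F b := by rw [hφ]; simp only [one_smul]; rw [hv]; congr 1; abel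
  rw [hφ0, hφ1] at hslope
  simp only [sub_zero, div_one] at hslope
  linarith

open RealInnerProductSpace
variable {E : Type*} [NormedAddCommGroup E] [InnerProductSpace ℝ E] [CompleteSpace E]

lemma hasGradientAt_half_norm_sq (c : ℝ) (x : E) :
    HasGradientAt (fun y : E => c / 2 * ‖y‖ ^ 2) (c • x) x := by
  have h := (hasStrictFDerivAt_norm_sq x).hasFDerivAt.const_mul (c / 2)
  rw [hasGradientAt_iff_hasFDerivAt]
  refine h.congr_fderiv ?_
  ext y
  simp [InnerProductSpace.toDual_apply_apply, real_inner_smul_left]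
  ring

lemma hasGradientAt_sub_half {F : E → ℝ} (hF : Differentiable ℝ F) (c : ℝ) (x : E) :
    HasGradientAt (fun y => F y - c / 2 * ‖y‖ ^ 2) (gradient F x - c • x) x := by
  have h1 := (hF x).hasGradientAt.hasFDerivAt
  have h2 := (hasGradientAt_half_norm_sq c x).hasFDerivAt
  rw [hasGradientAt_iff_hasFDerivAt, map_sub]
  exact h1.sub h2

lemma hasGradientAt_half_sub {F : E → ℝ} (hF : Differentiable ℝ F) (c : ℝ) (x : E) :
    HasGradientAt (fun y => c / 2 * ‖y‖ ^ 2 - F y) (c • x - gradient F x) x := by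
  have h1 := (hF x).hasGradientAt.hasFDerivAt
  have h2 := (hasGradientAt_half_norm_sq c x).hasFDerivAt
  rw [hasGradientAt_iff_hasFDerivAt, map_sub]
  exact h2.sub h1

lemma interp_inequality {F : E → ℝ} {μ L : ℝ} (hμ : 0 < μ) (hμL : μ ≤ L)
    (hF : Differentiable ℝ F)
    (hsc : ConvexOn ℝ Set.univ (fun x => F x - μ / 2 * ‖x‖ ^ 2))
    (hsm : ∀ a b : E, ‖gradient F a - gradient F b‖ ≤ L * ‖a - b‖) (a b : E) :
    μ * L * ‖a - b‖ ^ 2 + ‖gradient F a - gradient F b‖ ^ 2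
      ≤ (L + μ) * ⟪gradient F a - gradient F b, a - b⟫ := by
  set h : E → ℝ := fun x => F x - μ / 2 * ‖x‖ ^ 2 with hh
  set q : E → ℝ := fun x => L / 2 * ‖x‖ ^ 2 - F x with hq
  have hhd : Differentiable ℝ h := fun x => (hasGradientAt_sub_half hF μ x).differentiableAt
  have hqd : Differentiable ℝ q := fun x => (hasGradientAt_half_sub hF L x).differentiableAt
  have hgradh : ∀ x, gradient h x = gradient F x - μ • x :=
    fun x => (hasGradientAt_sub_half hF μ x).gradient
  have hgradq : ∀ x, gradient q x = L • x - gradient F x :=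
    fun x => (hasGradientAt_half_sub hF L x).gradient
  have hlow : ∀ x y : E, h x + ⟪gradient h x, y - x⟫ ≤ h y :=
    fun x y => lowerbound_of_convex hhd hsc x y
  have qlow : ∀ x y : E, q x + ⟪gradient q x, y - x⟫ ≤ q y := by
    refine fun x y => lowerbound_of_mono hqd (fun x y => ?_) x y
    rw [hgradq, hgradq]
    have e : L • y - gradient F y - (L • x - gradient F x)
        = L • (y - x) - (gradient F y - gradient F x) := by module
    rw [e, inner_sub_left, real_inner_smul_left, real_inner_self_eq_norm_sq]
    have h1 : ⟪gradient F y - gradient F x, y - x⟫ ≤ ‖gradient F y - gradient F x‖ * ‖y - x‖ :=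
      real_inner_le_norm _ _
    have h2 : ‖gradient F y - gradient F x‖ ≤ L * ‖y - x‖ := hsm y x
    nlinarith [norm_nonneg (y - x), norm_nonneg (gradient F y - gradient F x)]
  -- strong monotonicity of ∇F
  have hstrong : ∀ x y : E,
      μ * ‖y - x‖ ^ 2 ≤ ⟪gradient F y - gradient F x, y - x⟫ := by
    intro x y
    have h1 := hlow x y
    have h2 := hlow y x
    rw [hgradh] at h1 h2
    have e1 : ⟪gradient F y - μ • y, x - y⟫
        = -⟪gradient F y, y - x⟫ + μ * ⟪y, y - x⟫ := by
      rw [inner_sub_left, real_inner_smul_left,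
        show x - y = -(y-x) by abel, inner_neg_right, inner_neg_right]
      ring
    have e2 : ⟪gradient F x - μ • x, y - x⟫
        = ⟪gradient F x, y - x⟫ - μ * ⟪x, y - x⟫ := by
      rw [inner_sub_left, real_inner_smul_left]
    rw [e2] at h1; rw [e1] at h2
    have e3 : ⟪y, y - x⟫ - ⟪x, y - x⟫ = ‖y - x‖ ^ 2 := by
      rw [← inner_sub_left, real_inner_self_eq_norm_sq]
    rw [inner_sub_left]
    nlinarith [h1, h2, e3]
  -- cocoercivity of ∇h with constant L - μ
  have hco : ∀ x y : E, ‖gradient h y - gradient h x‖ ^ 2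
      ≤ (L - μ) * ⟪gradient h y - gradient h x, y - x⟫ := by
    intro x y
    have egrad : gradient h y - gradient h x
        = (gradient F y - gradient F x) - μ • (y - x) := by
      rw [hgradh, hgradh]; module
    rcases eq_or_lt_of_le hμL with heq | hlt
    · -- μ = L
      subst heq
      have h1 := hstrong x y
      have h2 := hsm y x
      have e : ‖gradient h y - gradient h x‖ ^ 2
          = ‖gradient F y - gradient F x‖ ^ 2
            - 2 * μ * ⟪gradient F y - gradient F x, y - x⟫ + μ ^ 2 * ‖y - x‖ ^ 2 := by
        rw [egrad, norm_sub_sq_real, real_inner_smul_right, norm_smul,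
          Real.norm_eq_abs, abs_of_pos hμ]
        ring
      have h2' : ‖gradient F y - gradient F x‖ ^ 2 ≤ μ ^ 2 * ‖y - x‖ ^ 2 := by
        nlinarith [norm_nonneg (gradient F y - gradient F x), norm_nonneg (y - x)]
      simp only [sub_self, zero_mul]
      nlinarith [e, h1, h2']
    · -- μ < L : Baillon–Haddad for h
      set K := L - μ with hK
      have hKpos : 0 < K := by rw [hK]; linarith
      have hKne : K ≠ 0 := ne_of_gt hKpos
      have onestep : ∀ x y : E, h x + ⟪gradient h x, y - x⟫
          + K⁻¹ / 2 * ‖gradient h y - gradient h x‖ ^ 2 ≤ h y := by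
        intro x y
        set c := K⁻¹ with hc
        set D := gradient h y - gradient h x with hD
        set w := y - c • D with hw
        have l1 := hlow x w
        have l2 := qlow y w
        -- rewrite q and ∇q in terms of h and K
        have hqh : ∀ z, q z = K / 2 * ‖z‖ ^ 2 - h z := by
          intro z; simp only [hq, hh, hK]; ring
        have hgradq' : gradient q y = K • y - gradient h y := by
          rw [hgradq, hgradh, hK]; module
        rw [hqh y, hqh w, hgradq'] at l2
        have ew1 : w - x = (y - x) - c • D := by rw [hw]; module
        have ew2 : w - y = -(c • D) := by rw [hw]; module
        have i1 : ⟪gradient h x, w - x⟫ = ⟪gradient h x, y - x⟫ - c * ⟪gradient h x, D⟫ := by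
          rw [ew1, inner_sub_right, real_inner_smul_right]
        have i2 : ⟪K • y - gradient h y, w - y⟫
            = -(K * (c * ⟪y, D⟫)) + c * ⟪gradient h y, D⟫ := by
          rw [ew2, inner_neg_right, inner_sub_left, real_inner_smul_left, real_inner_smul_right,
            real_inner_smul_right]
          ring
        have i3 : ‖w‖ ^ 2 = ‖y‖ ^ 2 - 2 * (c * ⟪y, D⟫) + c ^ 2 * ‖D‖ ^ 2 := by
          rw [hw, norm_sub_sq_real, real_inner_smul_right, norm_smul, Real.norm_eq_abs,
            abs_of_pos (by rw [hc]; exact inv_pos.mpr hKpos)]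
          ring
        have i4 : c * ⟪gradient h y, D⟫ - c * ⟪gradient h x, D⟫ = c * ‖D‖ ^ 2 := by
          rw [← mul_sub, ← inner_sub_left, ← hD, real_inner_self_eq_norm_sq]
        have e7 : K / 2 * (c ^ 2 * ‖D‖ ^ 2) = c / 2 * ‖D‖ ^ 2 := by
          rw [hc]; field_simp
        have e8 : K * (c * ⟪y, D⟫) = ⟪y, D⟫ := by
          rw [hc]; field_simp
        rw [i1] at l1
        rw [i2, i3] at l2
        have l2' : K / 2 * ‖y‖ ^ 2 - h y + (-(K * (c * ⟪y, D⟫)) + c * ⟪gradient h y, D⟫)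
            ≤ K / 2 * ‖y‖ ^ 2 - K * (c * ⟪y, D⟫) + c / 2 * ‖D‖ ^ 2 - h w := by
          calc K / 2 * ‖y‖ ^ 2 - h y + (-(K * (c * ⟪y, D⟫)) + c * ⟪gradient h y, D⟫)
              ≤ K / 2 * (‖y‖ ^ 2 - 2 * (c * ⟪y, D⟫) + c ^ 2 * ‖D‖ ^ 2) - h w := l2
            _ = K / 2 * ‖y‖ ^ 2 - K * (c * ⟪y, D⟫) + c / 2 * ‖D‖ ^ 2 - h w := by
                rw [mul_add, mul_sub, e7]; ring
        rw [hc] at i4 ⊢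
        have goal' : h x + ⟪gradient h x, y - x⟫ + K⁻¹ / 2 * ‖D‖ ^ 2 ≤ h y := by
          rw [hc] at l1 l2'
          linarith [l1, l2', i4]
        exact goal'
      have o1 := onestep x y
      have o2 := onestep y x
      have i6 : ‖gradient h x - gradient h y‖ = ‖gradient h y - gradient h x‖ := norm_sub_rev _ _
      rw [i6] at o2
      have i7 : ⟪gradient h x, y - x⟫ + ⟪gradient h y, x - y⟫
          = -⟪gradient h y - gradient h x, y - x⟫ := by
        rw [show x - y = -(y - x) by abel, inner_neg_right, inner_sub_left]
        ring
      have key : K⁻¹ * ‖gradient h y - gradient h x‖ ^ 2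
          ≤ ⟪gradient h y - gradient h x, y - x⟫ := by linarith [o1, o2, i7]
      calc ‖gradient h y - gradient h x‖ ^ 2
          = K * (K⁻¹ * ‖gradient h y - gradient h x‖ ^ 2) := by field_simp
        _ ≤ K * ⟪gradient h y - gradient h x, y - x⟫ :=
            mul_le_mul_of_nonneg_left key hKpos.le
        _ = (L - μ) * ⟪gradient h y - gradient h x, y - x⟫ := by rw [hK]
  -- conclude
  have hco' := hco b a
  have egrad : gradient h a - gradient h b
      = (gradient F a - gradient F b) - μ • (a - b) := by
    rw [hgradh, hgradh]; module
  rw [egrad] at hco'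
  have e9 : ‖gradient F a - gradient F b - μ • (a - b)‖ ^ 2
      = ‖gradient F a - gradient F b‖ ^ 2
        - 2 * μ * ⟪gradient F a - gradient F b, a - b⟫ + μ ^ 2 * ‖a - b‖ ^ 2 := by
    rw [norm_sub_sq_real, real_inner_smul_right, norm_smul, Real.norm_eq_abs, abs_of_pos hμ]
    ring
  have e10 : ⟪gradient F a - gradient F b - μ • (a - b), a - b⟫
      = ⟪gradient F a - gradient F b, a - b⟫ - μ * ‖a - b‖ ^ 2 := by
    rw [inner_sub_left, real_inner_smul_left, real_inner_self_eq_norm_sq]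
  rw [e9, e10] at hco'
  nlinarith [hco']

end AuxAnalysis


lemma card_filter_mem_powersetCard {n s : ℕ} (hs1 : 1 ≤ s) (i : Fin n) :
    ((powersetCard s (univ : Finset (Fin n))).filter (fun Ω => i ∈ Ω)).card
      = (n - 1).choose (s - 1) := by
  have h : ((powersetCard s (univ : Finset (Fin n))).filter (fun Ω => i ∈ Ω)).card
      = (powersetCard (s - 1) ((univ : Finset (Fin n)).erase i)).card := by
    refine card_bij' (fun Ω _ => Ω.erase i) (fun T _ => insert i T) ?_ ?_ ?_ ?_
    · intro Ω hΩ
      simp only [mem_filter, mem_powersetCard] at hΩ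
      obtain ⟨⟨_, hcard⟩, hi⟩ := hΩ
      simp only [mem_powersetCard]
      exact ⟨fun x hx => mem_erase.mpr ⟨(mem_erase.mp hx).1, mem_univ x⟩,
        by rw [card_erase_of_mem hi, hcard]⟩
    · intro T hT
      simp only [mem_powersetCard] at hT
      obtain ⟨hsub, hcard⟩ := hT
      have hiT : i ∉ T := fun hmem => (mem_erase.mp (hsub hmem)).1 rfl
      simp only [mem_filter, mem_powersetCard]
      refine ⟨⟨fun x _ => mem_univ x, ?_⟩, mem_insert_self i T⟩
      rw [card_insert_of_notMem hiT, hcard]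
      omega
    · intro Ω hΩ
      simp only [mem_filter] at hΩ
      exact insert_erase hΩ.2
    · intro T hT
      simp only [mem_powersetCard] at hT
      have hiT : i ∉ T := fun hmem => (mem_erase.mp (hT.1 hmem)).1 rfl
      exact erase_insert hiT
  rw [h, card_powersetCard, card_erase_of_mem (mem_univ i), card_univ, Fintype.card_fin]

lemma sum_powersetCard_inner_sum {n s : ℕ} (hs1 : 1 ≤ s) (F : Fin n → ℝ) :
    ∑ Ω ∈ powersetCard s (univ : Finset (Fin n)), ∑ i ∈ Ω, F i
      = ((n - 1).choose (s - 1) : ℝ) * ∑ i, F i := by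
  have step : ∀ Ω ∈ powersetCard s (univ : Finset (Fin n)),
      ∑ i ∈ Ω, F i = ∑ i : Fin n, if i ∈ Ω then F i else 0 := by
    intro Ω _
    rw [sum_ite_mem]
    congr 1
    simp
  rw [sum_congr rfl step, sum_comm]
  rw [mul_sum]
  congr 1
  funext i
  rw [sum_ite, sum_const_zero, add_zero, sum_const, card_filter_mem_powersetCard hs1 i]
  simp [mul_comm]

/-- The one-step contraction (eqff) at the heart of Theorem 1 of the paper:
one step of minibatch Point-SAGA, averaged over all size-s subsets Ω, contracts
the Lyapunov function Ψ by the stated factor. -/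
theorem pointSAGA_one_step_contraction {E : Type*} [NormedAddCommGroup E]
    [InnerProductSpace ℝ E] [FiniteDimensional ℝ E]
    (μ L γ : ℝ) (hμ : 0 < μ) (hμL : μ ≤ L) (hγ : 0 < γ)
    (n s : ℕ) (hn : 1 ≤ n) (hs1 : 1 ≤ s) (hsn : s ≤ n)
    (f : Fin n → E → ℝ) (hdiff : ∀ i, Differentiable ℝ (f i))
    (hsc : ∀ i, ConvexOn ℝ Set.univ (fun x => f i x - μ / 2 * ‖x‖ ^ 2))
    (hsmooth : ∀ i, ∀ a b : E, ‖gradient (f i) a - gradient (f i) b‖ ≤ L * ‖a - b‖)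
    (xstar : E) (hstar : ∑ i, gradient (f i) xstar = 0)
    (x : E) (gi : Fin n → E) (g : E) (hg : g = (n : ℝ)⁻¹ • ∑ i, gi i)
    -- one Point-SAGA step for each size-s subset Ω:
    (xi' : Finset (Fin n) → Fin n → E)
    (hxi' : ∀ Ω : Finset (Fin n), Ω.card = s → ∀ i ∈ Ω,
      xi' Ω i + γ • gradient (f i) (xi' Ω i) = x + γ • gi i - γ • g)
    (gi' : Finset (Fin n) → Fin n → E)
    (hgi'in : ∀ Ω : Finset (Fin n), Ω.card = s → ∀ i ∈ Ω,
      gi' Ω i = gradient (f i) (xi' Ω i))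
    (hgi'out : ∀ Ω : Finset (Fin n), Ω.card = s → ∀ i ∉ Ω, gi' Ω i = gi i)
    (x' : Finset (Fin n) → E)
    (hx' : ∀ Ω : Finset (Fin n), Ω.card = s → x' Ω = (s : ℝ)⁻¹ • ∑ i ∈ Ω, xi' Ω i)
    -- the Lyapunov function:
    (Ψ : E → (Fin n → E) → ℝ)
    (hΨ : ∀ (y : E) (h : Fin n → E),
      Ψ y h = (1 + 2 * γ * μ * L / (L + μ)) * s * ‖y - xstar‖ ^ 2
        + (1 + 2 / (γ * (L + μ))) * γ ^ 2 *
            ∑ i, ‖h i - gradient (f i) xstar‖ ^ 2) :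
    ((n.choose s : ℝ))⁻¹ *
        ∑ Ω ∈ powersetCard s (univ : Finset (Fin n)), Ψ (x' Ω) (gi' Ω)
      ≤ max (1 - 2 * γ * μ * L / (L + μ + 2 * γ * μ * L))
            (1 - 2 / (γ * (L + μ) + 2) * ((s : ℝ) / n)) * Ψ x gi := by
  have hn0 : (0:ℝ) < n := by exact_mod_cast hn
  have hs0 : (0:ℝ) < s := by exact_mod_cast hs1
  have hnne : (n:ℝ) ≠ 0 := ne_of_gt hn0
  have hsne : (s:ℝ) ≠ 0 := ne_of_gt hs0
  have hLμ : (0:ℝ) < L + μ := by linarith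
  set α : ℝ := 1 + 2 * γ * μ * L / (L + μ) with hα
  set β : ℝ := (1 + 2 / (γ * (L + μ))) * γ ^ 2 with hβ
  have hL : (0:ℝ) < L := lt_of_lt_of_le hμ hμL
  have hαpos : 0 < α := by
    have : 0 < 2 * γ * μ * L / (L + μ) := by positivity
    rw [hα]; linarith
  have hβγ : β = γ ^ 2 + 2 * γ / (L + μ) := by rw [hβ]; field_simp
  have hβpos : 0 < β := by rw [hβγ]; positivity
  set v : Fin n → E := fun i => gi i - gradient (f i) xstar with hv
  set A : ℝ := ∑ i, ‖v i‖ ^ 2 with hA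
  set W : ℝ := ‖x - xstar‖ ^ 2 with hW
  have hA0 : 0 ≤ A := by rw [hA]; positivity
  have hW0 : 0 ≤ W := by rw [hW]; positivity
  set Z : Fin n → ℝ := fun i => ‖(x - xstar) + γ • v i - γ • g‖ ^ 2 with hZ
  -- Ψ at the current point
  have hΨx : Ψ x gi = α * s * W + β * A := by rw [hΨ]
  -- key per-point contraction
  have key : ∀ Ω : Finset (Fin n), Ω.card = s → ∀ i ∈ Ω,
      α * ‖xi' Ω i - xstar‖ ^ 2
        + β * ‖gradient (f i) (xi' Ω i) - gradient (f i) xstar‖ ^ 2 ≤ Z i := by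
    intro Ω hΩ i hi
    set p := xi' Ω i with hp
    set d := gradient (f i) p - gradient (f i) xstar with hd
    set u := p - xstar with hu
    have hsum : u + γ • d = (x - xstar) + γ • v i - γ • g := by
      have h1 := hxi' Ω hΩ i hi
      have h2 : u + γ • d
          = (p + γ • gradient (f i) p) - (xstar + γ • gradient (f i) xstar) := by
        rw [hu, hd]; module
      rw [h2, h1, hv]; module
    have hZi : Z i = ‖u + γ • d‖ ^ 2 := by simp only [hZ]; rw [← hsum]
    have hexp : ‖u + γ • d‖ ^ 2 = ‖u‖ ^ 2 + 2 * (γ * ⟪u, d⟫) + γ ^ 2 * ‖d‖ ^ 2 := by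
      rw [norm_add_sq_real, real_inner_smul_right, norm_smul, Real.norm_eq_abs,
        abs_of_pos hγ]
      ring
    have hint := interp_inequality hμ hμL (hdiff i) (hsc i) (hsmooth i) p xstar
    rw [← hd, ← hu] at hint
    set c : ℝ := 2 * γ / (L + μ) with hc
    have hcpos : 0 < c := by rw [hc]; positivity
    have hαc : α = 1 + c * (μ * L) := by rw [hα, hc]; field_simp
    have hβc : β = γ ^ 2 + c := by rw [hβγ, hc]
    have hint2 : c * (μ * L * ‖u‖ ^ 2 + ‖d‖ ^ 2) ≤ 2 * γ * ⟪d, u⟫ := by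
      calc c * (μ * L * ‖u‖ ^ 2 + ‖d‖ ^ 2) ≤ c * ((L + μ) * ⟪d, u⟫) :=
            mul_le_mul_of_nonneg_left hint hcpos.le
        _ = 2 * γ * ⟪d, u⟫ := by rw [hc]; field_simp
    have hcomm : ⟪d, u⟫ = ⟪u, d⟫ := real_inner_comm _ _
    rw [hZi, hexp, hαc, hβc]
    nlinarith [hint2, hcomm]
  -- step A : per-Ω bound
  have stepA : ∀ Ω ∈ powersetCard s (univ : Finset (Fin n)),
      Ψ (x' Ω) (gi' Ω) ≤ (∑ i ∈ Ω, (Z i - β * ‖v i‖ ^ 2)) + β * A := by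
    intro Ω hΩmem
    have hΩ : Ω.card = s := mem_powersetCard_univ.mp hΩmem
    rw [hΨ]
    have hxavg : x' Ω - xstar = (s : ℝ)⁻¹ • ∑ i ∈ Ω, (xi' Ω i - xstar) := by
      rw [hx' Ω hΩ, sum_sub_distrib, smul_sub, sum_const, hΩ, ← Nat.cast_smul_eq_nsmul ℝ,
        smul_smul, inv_mul_cancel₀ hsne, one_smul]
    have hpart1 : (s : ℝ) * ‖x' Ω - xstar‖ ^ 2 ≤ ∑ i ∈ Ω, ‖xi' Ω i - xstar‖ ^ 2 := by
      rw [hxavg, norm_smul, Real.norm_eq_abs, abs_of_pos (inv_pos.mpr hs0), mul_pow]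
      have h1 : ‖∑ i ∈ Ω, (xi' Ω i - xstar)‖ ≤ ∑ i ∈ Ω, ‖xi' Ω i - xstar‖ :=
        norm_sum_le _ _
      have h2 : (∑ i ∈ Ω, ‖xi' Ω i - xstar‖) ^ 2
          ≤ (s : ℝ) * ∑ i ∈ Ω, ‖xi' Ω i - xstar‖ ^ 2 := by
        have := sq_sum_le_card_mul_sum_sq (s := Ω) (f := fun i => ‖xi' Ω i - xstar‖)
        rwa [hΩ] at this
      have h3 : ‖∑ i ∈ Ω, (xi' Ω i - xstar)‖ ^ 2 ≤ (∑ i ∈ Ω, ‖xi' Ω i - xstar‖) ^ 2 := by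
        apply pow_le_pow_left₀ (norm_nonneg _) h1
      have h4 : (0:ℝ) < (s:ℝ)⁻¹ ^ 2 := by positivity
      calc (s : ℝ) * ((s:ℝ)⁻¹ ^ 2 * ‖∑ i ∈ Ω, (xi' Ω i - xstar)‖ ^ 2)
          ≤ (s : ℝ) * ((s:ℝ)⁻¹ ^ 2 * ((s : ℝ) * ∑ i ∈ Ω, ‖xi' Ω i - xstar‖ ^ 2)) := by
            have := le_trans h3 h2
            apply mul_le_mul_of_nonneg_left _ hs0.le
            exact mul_le_mul_of_nonneg_left this h4.le
        _ = ∑ i ∈ Ω, ‖xi' Ω i - xstar‖ ^ 2 := by field_simp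
    have hpart2 : ∑ i, ‖gi' Ω i - gradient (f i) xstar‖ ^ 2
        = ∑ i ∈ Ω, ‖gradient (f i) (xi' Ω i) - gradient (f i) xstar‖ ^ 2
          + ∑ i ∈ Ωᶜ, ‖v i‖ ^ 2 := by
      rw [← sum_add_sum_compl Ω (fun i => ‖gi' Ω i - gradient (f i) xstar‖ ^ 2)]
      congr 1
      · exact sum_congr rfl fun i hi => by rw [hgi'in Ω hΩ i hi]
      · exact sum_congr rfl fun i hi => by
          rw [hgi'out Ω hΩ i (mem_compl.mp hi), hv]
    have hAsplit : ∑ i ∈ Ωᶜ, ‖v i‖ ^ 2 = A - ∑ i ∈ Ω, ‖v i‖ ^ 2 := by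
      rw [hA, ← sum_add_sum_compl Ω (fun i => ‖v i‖ ^ 2)]; ring
    have hkeysum : ∑ i ∈ Ω, (α * ‖xi' Ω i - xstar‖ ^ 2
        + β * ‖gradient (f i) (xi' Ω i) - gradient (f i) xstar‖ ^ 2) ≤ ∑ i ∈ Ω, Z i :=
      sum_le_sum (key Ω hΩ)
    rw [sum_add_distrib, ← mul_sum, ← mul_sum] at hkeysum
    rw [hpart2, hAsplit, sum_sub_distrib, ← mul_sum]
    have h5 : α * ((s:ℝ) * ‖x' Ω - xstar‖ ^ 2) ≤ α * ∑ i ∈ Ω, ‖xi' Ω i - xstar‖ ^ 2 :=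
      mul_le_mul_of_nonneg_left hpart1 hαpos.le
    linarith [hkeysum, h5]
  -- positivity of the binomial coefficient
  have hCpos : 0 < n.choose s := Nat.choose_pos hsn
  have hC0 : (0:ℝ) < (n.choose s : ℝ) := by exact_mod_cast hCpos
  have hCne : (n.choose s : ℝ) ≠ 0 := ne_of_gt hC0
  have hcard : (powersetCard s (univ : Finset (Fin n))).card = n.choose s := by
    rw [card_powersetCard, card_univ, Fintype.card_fin]
  -- step B : sum over Ω
  have stepB : ∑ Ω ∈ powersetCard s (univ : Finset (Fin n)), Ψ (x' Ω) (gi' Ω)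
      ≤ ((n - 1).choose (s - 1) : ℝ) * (∑ i, (Z i - β * ‖v i‖ ^ 2))
        + (n.choose s : ℝ) * (β * A) := by
    calc ∑ Ω ∈ powersetCard s (univ : Finset (Fin n)), Ψ (x' Ω) (gi' Ω)
        ≤ ∑ Ω ∈ powersetCard s (univ : Finset (Fin n)),
            ((∑ i ∈ Ω, (Z i - β * ‖v i‖ ^ 2)) + β * A) := sum_le_sum stepA
      _ = (∑ Ω ∈ powersetCard s (univ : Finset (Fin n)), ∑ i ∈ Ω, (Z i - β * ‖v i‖ ^ 2))
            + (powersetCard s (univ : Finset (Fin n))).card • (β * A) := by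
          rw [sum_add_distrib, sum_const]
      _ = ((n - 1).choose (s - 1) : ℝ) * (∑ i, (Z i - β * ‖v i‖ ^ 2))
            + (n.choose s : ℝ) * (β * A) := by
          rw [sum_powersetCard_inner_sum hs1, hcard, nsmul_eq_mul]
  -- the choose ratio
  have hratio : ((n.choose s : ℝ))⁻¹ * ((n - 1).choose (s - 1) : ℝ) = (s : ℝ) / n := by
    have hid : n * (n - 1).choose (s - 1) = s * n.choose s := by
      have h := Nat.add_one_mul_choose_eq (n - 1) (s - 1)
      have e1 : n - 1 + 1 = n := by omega
      have e2 : s - 1 + 1 = s := by omega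
      rw [e1, e2] at h
      rw [h]; ring
    have hid' : (n:ℝ) * ((n - 1).choose (s - 1) : ℝ) = (s:ℝ) * (n.choose s : ℝ) := by
      exact_mod_cast hid
    field_simp
    linarith [hid']
  -- step D : bound on ∑ Z
  have hsumv : ∑ i, v i = (n : ℝ) • g := by
    rw [hv] at *
    rw [sum_sub_distrib, hstar, sub_zero, hg, smul_smul, mul_inv_cancel₀ hnne, one_smul]
  have hZsum : ∑ i, Z i ≤ (n : ℝ) * W + γ ^ 2 * A := by
    have hzi : ∀ i, Z i = W + 2 * (γ * ⟪x - xstar, v i - g⟫) + γ ^ 2 * ‖v i - g‖ ^ 2 := by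
      intro i
      simp only [hZ]
      have e : (x - xstar) + γ • v i - γ • g = (x - xstar) + γ • (v i - g) := by module
      rw [e, norm_add_sq_real, real_inner_smul_right, norm_smul, Real.norm_eq_abs,
        abs_of_pos hγ, hW]
      ring
    rw [sum_congr rfl (fun i _ => hzi i)]
    rw [sum_add_distrib, sum_add_distrib, sum_const, card_univ, Fintype.card_fin]
    have hcross : ∑ i, 2 * (γ * ⟪x - xstar, v i - g⟫) = 0 := by
      have e1 : ∑ i : Fin n, (v i - g) = 0 := by
        rw [sum_sub_distrib, hsumv, sum_const, card_univ, Fintype.card_fin,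
          ← Nat.cast_smul_eq_nsmul ℝ, sub_self]
      have e2 : ∑ i, ⟪x - xstar, v i - g⟫ = ⟪x - xstar, ∑ i : Fin n, (v i - g)⟫ :=
        (inner_sum _ _ _).symm
      calc ∑ i, 2 * (γ * ⟪x - xstar, v i - g⟫) = 2 * γ * ∑ i, ⟪x - xstar, v i - g⟫ := by
            rw [mul_sum]; exact sum_congr rfl fun i _ => by ring
        _ = 0 := by rw [e2, e1, inner_zero_right]; ring
    rw [hcross]
    have hvg : ∑ i, γ ^ 2 * ‖v i - g‖ ^ 2 = γ ^ 2 * (A - (n:ℝ) * ‖g‖ ^ 2) := by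
      have e3 : ∀ i : Fin n, ‖v i - g‖ ^ 2 = ‖v i‖ ^ 2 - 2 * ⟪v i, g⟫ + ‖g‖ ^ 2 :=
        fun i => norm_sub_sq_real _ _
      rw [← mul_sum, sum_congr rfl (fun i _ => e3 i), sum_add_distrib, sum_sub_distrib,
        sum_const, card_univ, Fintype.card_fin]
      have e4 : ∑ i, 2 * ⟪v i, g⟫ = 2 * ((n:ℝ) * ‖g‖ ^ 2) := by
        rw [← mul_sum, ← sum_inner, hsumv, real_inner_smul_left,
          real_inner_self_eq_norm_sq]
      rw [e4, ← hA, nsmul_eq_mul]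
      ring
    rw [hvg, nsmul_eq_mul]
    have : 0 ≤ γ ^ 2 * ((n:ℝ) * ‖g‖ ^ 2) := by positivity
    nlinarith [this]
  -- final assembly
  set c₁ : ℝ := 1 - 2 * γ * μ * L / (L + μ + 2 * γ * μ * L) with hc₁
  set c₂ : ℝ := 1 - 2 / (γ * (L + μ) + 2) * ((s : ℝ) / n) with hc₂
  have hden1 : (0:ℝ) < L + μ + 2 * γ * μ * L := by positivity
  have hden2 : (0:ℝ) < γ * (L + μ) + 2 := by positivity
  have idc1 : c₁ * α = 1 := by
    rw [hc₁, hα]; field_simp; try ring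
  have idc2 : c₂ * β = (s:ℝ) / n * γ ^ 2 + (1 - (s:ℝ)/n) * β := by
    rw [hc₂, hβγ]
    field_simp
    try ring
  set M : ℝ := max c₁ c₂ with hM
  have hc₁M : c₁ ≤ M := le_max_left _ _
  have hc₂M : c₂ ≤ M := le_max_right _ _
  -- chain of inequalities
  have main1 : ((n.choose s : ℝ))⁻¹ *
      ∑ Ω ∈ powersetCard s (univ : Finset (Fin n)), Ψ (x' Ω) (gi' Ω)
      ≤ (s:ℝ)/n * (∑ i, (Z i - β * ‖v i‖ ^ 2)) + β * A := by
    have h1 := mul_le_mul_of_nonneg_left stepB (inv_nonneg.mpr hC0.le)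
    calc ((n.choose s : ℝ))⁻¹ *
        ∑ Ω ∈ powersetCard s (univ : Finset (Fin n)), Ψ (x' Ω) (gi' Ω)
        ≤ ((n.choose s : ℝ))⁻¹ * (((n - 1).choose (s - 1) : ℝ)
            * (∑ i, (Z i - β * ‖v i‖ ^ 2)) + (n.choose s : ℝ) * (β * A)) := h1
      _ = (s:ℝ)/n * (∑ i, (Z i - β * ‖v i‖ ^ 2)) + β * A := by
          rw [mul_add, ← mul_assoc, hratio, ← mul_assoc, inv_mul_cancel₀ hCne, one_mul]
  have hsumZv : ∑ i, (Z i - β * ‖v i‖ ^ 2) ≤ (n:ℝ) * W + γ ^ 2 * A - β * A := by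
    rw [sum_sub_distrib, ← mul_sum, ← hA]
    linarith [hZsum]
  have main2 : (s:ℝ)/n * (∑ i, (Z i - β * ‖v i‖ ^ 2)) + β * A
      ≤ (s:ℝ) * W + ((s:ℝ)/n * γ ^ 2 + (1 - (s:ℝ)/n) * β) * A := by
    have hsn0 : 0 ≤ (s:ℝ)/n := by positivity
    have h2 := mul_le_mul_of_nonneg_left hsumZv hsn0
    have e5 : (s:ℝ)/n * ((n:ℝ) * W + γ ^ 2 * A - β * A) + β * A
        = (s:ℝ) * W + ((s:ℝ)/n * γ ^ 2 + (1 - (s:ℝ)/n) * β) * A := by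
      field_simp
      ring
    linarith [h2, e5]
  have main3 : (s:ℝ) * W + ((s:ℝ)/n * γ ^ 2 + (1 - (s:ℝ)/n) * β) * A ≤ M * Ψ x gi := by
    rw [hΨx]
    have t1 : (s:ℝ) * W = c₁ * (α * s * W) := by
      linear_combination (-(↑s * W)) * idc1
    have t2 : ((s:ℝ)/n * γ ^ 2 + (1 - (s:ℝ)/n) * β) * A = c₂ * (β * A) := by
      linear_combination (-A) * idc2
    have u1 : 0 ≤ α * s * W := by positivity
    have u2 : 0 ≤ β * A := by positivity
    calc (s:ℝ) * W + ((s:ℝ)/n * γ ^ 2 + (1 - (s:ℝ)/n) * β) * A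
        = c₁ * (α * s * W) + c₂ * (β * A) := by rw [t1, t2]
      _ ≤ M * (α * s * W) + M * (β * A) :=
          add_le_add (mul_le_mul_of_nonneg_right hc₁M u1) (mul_le_mul_of_nonneg_right hc₂M u2)
      _ = M * (α * s * W + β * A) := by ring
  calc ((n.choose s : ℝ))⁻¹ *
      ∑ Ω ∈ powersetCard s (univ : Finset (Fin n)), Ψ (x' Ω) (gi' Ω)
      ≤ (s:ℝ)/n * (∑ i, (Z i - β * ‖v i‖ ^ 2)) + β * A := main1
    _ ≤ (s:ℝ) * W + ((s:ℝ)/n * γ ^ 2 + (1 - (s:ℝ)/n) * β) * A := main2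
    _ ≤ M * Ψ x gi := main3
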